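/- Let H ⊆ V(T_n), let r be the root of T_n, and let H', H'' be the intersections of H with the two subtrees T', T'' of T_n − r (each isomorphic to T_{n−1}), with signatures computed within T' and T'' respectively (levels shifted so the roots of T', T'' are at level 0). If r ∈ H, then S(H) is the disjoint union of S(H') ∪ S(H'') and {σ ∪ {0} : σ ∈ S(H') ∩ S(H'')} (after shifting all signature levels up by 1), and hence |S(H)| = |S(H')| + |S(H'')|. -/

import Mathlib

/-- Vertex set of the full binary tree `T_n` of depth `n-1`:
binary strings of length `< n`; the level of a vertex is its length. -/
def treeVerts (n : ℕ) : Set (List Bool) := {x | x.length < n}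

/-- Weight of a set of vertices: `w(H) = Σ_{x ∈ H} 2^(-level x)`. -/
noncomputable def weight (H : Set (List Bool)) : ℝ :=
  ∑' x : H, (2 : ℝ) ^ (-((x : List Bool).length : ℤ))

/-- `f` is a regular embedding of `T_d`: vertices at equal levels map to equal
levels, and the two children of each vertex map to descendants of distinct
children of the image (descendant = extension of the string). -/
def IsRegEmb (d : ℕ) (f : List Bool → List Bool) : Prop :=
  (∀ x y : List Bool, x.length < d → y.length < d → x.length = y.length →
      (f x).length = (f y).length) ∧
  (∀ x : List Bool, x.length + 1 < d → ∃ c : Bool,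
      (f x ++ [c]) <+: f (x ++ [false]) ∧ (f x ++ [!c]) <+: f (x ++ [true]))

/-- `S(H)`: the set of signatures (sets of occupied levels) of all regular
embeddings of some `T_d`, `d ≥ 0`, into `H`. -/
def sigs (H : Set (List Bool)) : Set (Set ℕ) :=
  {σ | ∃ (d : ℕ) (f : List Bool → List Bool), IsRegEmb d f ∧
      (∀ x : List Bool, x.length < d → f x ∈ H) ∧
      σ = {l : ℕ | ∃ x : List Bool, x.length < d ∧ (f x).length = l}}

-- helpers

lemma regEmb_prefix {d : ℕ} {f : List Bool → List Bool} (hf : IsRegEmb d f) :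
    ∀ z x : List Bool, x.length + z.length < d → f x <+: f (x ++ z) := by
  intro z
  induction z using List.reverseRecOn with
  | nil => intro x _; simp
  | append_singleton z b ih =>
    intro x hx
    rw [List.length_append, List.length_singleton] at hx
    have h2 : f x <+: f (x ++ z) := ih x (by omega)
    have h1 : (x ++ z).length + 1 < d := by rw [List.length_append]; omega
    obtain ⟨c, hc0, hc1⟩ := hf.2 (x ++ z) h1
    rw [← List.append_assoc]
    cases b with
    | false => exact h2.trans ((List.prefix_append _ [c]).trans hc0)
    | true => exact h2.trans ((List.prefix_append _ [!c]).trans hc1)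

def lev (f : List Bool → List Bool) (k : ℕ) : ℕ :=
  (f (List.replicate k false)).length

lemma lev_eq {d : ℕ} {f : List Bool → List Bool} (hf : IsRegEmb d f)
    {x : List Bool} (hx : x.length < d) : (f x).length = lev f x.length :=
  hf.1 x (List.replicate x.length false) hx (by simpa using hx) (by simp)

lemma lev_lt {d : ℕ} {f : List Bool → List Bool} (hf : IsRegEmb d f)
    {j k : ℕ} (hjk : j < k) (hk : k < d) : lev f j < lev f k := by
  induction k with
  | zero => omega
  | succ k ih =>
    have hstep : lev f k < lev f (k + 1) := by
      obtain ⟨c, hc0, -⟩ := hf.2 (List.replicate k false) (by simpa using hk)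
      have h := hc0.length_le
      simp only [List.length_append, List.length_singleton] at h
      simp only [lev, List.replicate_succ']
      omega
    rcases Nat.lt_succ_iff_lt_or_eq.mp hjk with h | rfl
    · exact (ih h (by omega)).trans hstep
    · exact hstep

lemma sig_eq {d : ℕ} {f : List Bool → List Bool} (hf : IsRegEmb d f) :
    {l : ℕ | ∃ x : List Bool, x.length < d ∧ (f x).length = l} = lev f '' Set.Iio d := by
  ext l
  constructor
  · rintro ⟨x, hx, rfl⟩; exact ⟨x.length, hx, (lev_eq hf hx).symm⟩
  · rintro ⟨k, hk, rfl⟩; exact ⟨List.replicate k false, by simpa using hk, rfl⟩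

lemma strictMono_image_unique {d : ℕ} {g₀ g₁ : ℕ → ℕ}
    (hm₀ : ∀ j k, j < k → k < d → g₀ j < g₀ k)
    (hm₁ : ∀ j k, j < k → k < d → g₁ j < g₁ k)
    (h : g₀ '' Set.Iio d = g₁ '' Set.Iio d) :
    ∀ k < d, g₀ k = g₁ k := by
  intro k
  induction k using Nat.strong_induction_on with
  | _ k IH =>
    intro hk
    obtain ⟨m, hm, hmk⟩ : g₀ k ∈ g₁ '' Set.Iio d := h ▸ ⟨k, hk, rfl⟩
    obtain ⟨m', hm', hm'k⟩ : g₁ k ∈ g₀ '' Set.Iio d := h.symm ▸ ⟨k, hk, rfl⟩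
    simp only [Set.mem_Iio] at hm hm'
    rcases lt_trichotomy m k with h1 | rfl | h1
    · have e1 := IH m h1 (lt_trans h1 hk)
      have e2 := hm₀ m k h1 hk
      omega
    · omega
    · have h2 := hm₁ k m h1 hm
      rcases lt_trichotomy m' k with h3 | rfl | h3
      · have e1 := IH m' h3 (lt_trans h3 hk)
        have e2 := hm₁ m' k h3 hk
        omega
      · omega
      · have e2 := hm₀ k m' h3 hm'
        omega

lemma lev_unique {d₀ d₁ : ℕ} {f₀ f₁ : List Bool → List Bool}
    (h₀ : IsRegEmb d₀ f₀) (h₁ : IsRegEmb d₁ f₁)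
    (hσ : lev f₀ '' Set.Iio d₀ = lev f₁ '' Set.Iio d₁) :
    d₀ = d₁ ∧ ∀ k < d₀, lev f₀ k = lev f₁ k := by
  have hcard : ∀ (d : ℕ) (f : List Bool → List Bool), IsRegEmb d f →
      (lev f '' Set.Iio d).ncard = d := by
    intro d f hf
    rw [Set.ncard_image_of_injOn, ← Finset.coe_range, Set.ncard_coe_finset, Finset.card_range]
    intro a ha b hb hab
    rcases lt_trichotomy a b with h | h | h
    · exact absurd hab (lev_lt hf h hb).ne
    · exact h
    · exact absurd hab (lev_lt hf h ha).ne'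
  have hd : d₀ = d₁ := by
    have e0 := hcard d₀ f₀ h₀
    have e1 := hcard d₁ f₁ h₁
    rw [hσ, e1] at e0
    exact e0.symm
  subst hd
  refine ⟨rfl, fun k hk => ?_⟩
  exact strictMono_image_unique (fun j k hjk hkd => lev_lt h₀ hjk hkd)
    (fun j k hjk hkd => lev_lt h₁ hjk hkd) hσ k hk

lemma empty_mem_sigs (K : Set (List Bool)) : (∅ : Set ℕ) ∈ sigs K := by
  refine ⟨0, id, ⟨?_, ?_⟩, ?_, ?_⟩
  · intro x y hx; omega
  · intro x hx; omega
  · intro x hx; omega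
  · ext l
    simp only [Set.mem_empty_iff_false, Set.mem_setOf_eq, false_iff]
    rintro ⟨x, hx, -⟩; omega

lemma lift_mem {H : Set (List Bool)} (b : Bool) {σ : Set ℕ}
    (hσ : σ ∈ sigs {t | b :: t ∈ H}) : (· + 1) '' σ ∈ sigs H := by
  obtain ⟨d, f, hreg, hmem, rfl⟩ := hσ
  refine ⟨d, fun x => b :: f x, ⟨?_, ?_⟩, ?_, ?_⟩
  · intro x y hx hy hxy
    simp only [List.length_cons, hreg.1 x y hx hy hxy]
  · intro x hx
    obtain ⟨c, hc0, hc1⟩ := hreg.2 x hx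
    exact ⟨c, by simpa [List.cons_prefix_cons] using hc0,
      by simpa [List.cons_prefix_cons] using hc1⟩
  · intro x hx; exact hmem x hx
  · ext l
    simp only [Set.mem_setOf_eq, Set.mem_image, List.length_cons]
    constructor
    · rintro ⟨m, ⟨x, hx, rfl⟩, rfl⟩; exact ⟨x, hx, rfl⟩
    · rintro ⟨x, hx, rfl⟩; exact ⟨(f x).length, ⟨x, hx, rfl⟩, rfl⟩

def glue (f₀ f₁ : List Bool → List Bool) : List Bool → List Bool
  | [] => []
  | false :: y => false :: f₀ y
  | true :: y => true :: f₁ y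

lemma combine_mem {H : Set (List Bool)} (hr : ([] : List Bool) ∈ H) {σ : Set ℕ}
    (h₀ : σ ∈ sigs {t | false :: t ∈ H}) (h₁ : σ ∈ sigs {t | true :: t ∈ H}) :
    insert 0 ((· + 1) '' σ) ∈ sigs H := by
  obtain ⟨d₀, f₀, hreg₀, hmem₀, rfl⟩ := h₀
  obtain ⟨d₁, f₁, hreg₁, hmem₁, hσ⟩ := h₁
  rw [sig_eq hreg₀, sig_eq hreg₁] at hσ
  obtain ⟨hd, hL⟩ := lev_unique hreg₀ hreg₁ hσ
  subst hd
  have key : ∀ (b : Bool) (z : List Bool), z.length < d₀ →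
      (glue f₀ f₁ (b :: z)).length = lev f₀ z.length + 1 := by
    intro b z hz
    cases b
    · simp [glue, lev_eq hreg₀ hz]
    · simp [glue, lev_eq hreg₁ hz, hL z.length hz]
  refine ⟨d₀ + 1, glue f₀ f₁, ⟨?_, ?_⟩, ?_, ?_⟩
  · intro x y hx hy hxy
    match x, y with
    | [], [] => rfl
    | [], (b :: y) => simp at hxy
    | (b :: x), [] => simp at hxy
    | (b :: x), (b' :: y) =>
      simp only [List.length_cons] at hx hy hxy
      rw [key b x (by omega), key b' y (by omega), show x.length = y.length by omega]
  · intro x hx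
    match x with
    | [] =>
      refine ⟨false, ?_, ?_⟩ <;> simp [glue, List.cons_prefix_cons]
    | (false :: y) =>
      simp only [List.length_cons] at hx
      obtain ⟨c, hc0, hc1⟩ := hreg₀.2 y (by omega)
      refine ⟨c, ?_, ?_⟩
      · simpa [glue, List.cons_prefix_cons] using hc0
      · simpa [glue, List.cons_prefix_cons] using hc1
    | (true :: y) =>
      simp only [List.length_cons] at hx
      obtain ⟨c, hc0, hc1⟩ := hreg₁.2 y (by omega)
      refine ⟨c, ?_, ?_⟩
      · simpa [glue, List.cons_prefix_cons] using hc0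
      · simpa [glue, List.cons_prefix_cons] using hc1
  · intro x hx
    match x with
    | [] => exact hr
    | (false :: y) =>
      simp only [List.length_cons] at hx
      exact hmem₀ y (by omega)
    | (true :: y) =>
      simp only [List.length_cons] at hx
      exact hmem₁ y (by omega)
  · rw [sig_eq hreg₀]
    ext l
    simp only [Set.mem_insert_iff, Set.mem_image, Set.mem_Iio, Set.mem_setOf_eq]
    constructor
    · rintro (rfl | ⟨m, ⟨k, hk, rfl⟩, rfl⟩)
      · exact ⟨[], by simp [glue]⟩
      · refine ⟨false :: List.replicate k false, by simpa using hk, ?_⟩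
        rw [key false (List.replicate k false) (by simpa using hk)]
        simp [lev]
    · rintro ⟨x, hx, rfl⟩
      match x with
      | [] => exact Or.inl rfl
      | (b :: y) =>
        simp only [List.length_cons] at hx
        refine Or.inr ⟨lev f₀ y.length, ⟨y.length, by omega, rfl⟩, ?_⟩
        rw [key b y (by omega)]

lemma sigs_subset {H : Set (List Bool)} {σ : Set ℕ} (hσ : σ ∈ sigs H) :
    (∃ b : Bool, ∃ τ ∈ sigs {t | b :: t ∈ H}, σ = (· + 1) '' τ) ∨
    (∃ τ, τ ∈ sigs {t | false :: t ∈ H} ∧ τ ∈ sigs {t | true :: t ∈ H} ∧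
      σ = insert 0 ((· + 1) '' τ)) := by
  obtain ⟨d, f, hreg, hmem, rfl⟩ := hσ
  rcases Nat.eq_zero_or_pos d with rfl | hd
  · left
    refine ⟨false, ∅, empty_mem_sigs _, ?_⟩
    ext l
    simp only [Set.mem_setOf_eq, Set.image_empty, Set.mem_empty_iff_false, iff_false]
    rintro ⟨x, hx, -⟩; omega
  rcases heq : f [] with _ | ⟨b, t⟩
  · -- f [] = []
    rcases Nat.lt_or_ge d 2 with hd2 | hd2
    · -- d = 1, σ = {0}
      have hd1 : d = 1 := by omega
      subst hd1
      right
      refine ⟨∅, empty_mem_sigs _, empty_mem_sigs _, ?_⟩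
      ext l
      simp only [Set.mem_setOf_eq, Set.image_empty, Set.mem_insert_iff,
        Set.mem_empty_iff_false, or_false]
      constructor
      · rintro ⟨x, hx, rfl⟩
        have hx0 : x = [] := List.eq_nil_of_length_eq_zero (by omega)
        subst hx0; rw [heq]; rfl
      · rintro rfl
        exact ⟨[], by simp, by rw [heq]; rfl⟩
    · -- d ≥ 2
      obtain ⟨c, hc0, hc1⟩ := hreg.2 [] (by simp; omega)
      rw [heq, List.nil_append] at hc0 hc1
      have hpre : ∀ (b : Bool) (x : List Bool), x.length + 1 < d →
          f [b] <+: f (b :: x) := by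
        intro b x hx
        simpa using regEmb_prefix hreg x [b] (by simp only [List.length_singleton]; omega)
      have hhead : ∀ x : List Bool, x.length + 1 < d →
          f (false :: x) = c :: (f (false :: x)).tail := by
        intro x hx
        obtain ⟨u, hu⟩ := hc0.trans (hpre false x hx)
        rw [← hu]; rfl
      have hhead' : ∀ x : List Bool, x.length + 1 < d →
          f (true :: x) = (!c) :: (f (true :: x)).tail := by
        intro x hx
        obtain ⟨u, hu⟩ := hc1.trans (hpre true x hx)
        rw [← hu]; rfl
      set τ : Set ℕ :=
        {l | ∃ x : List Bool, x.length < d - 1 ∧ ((f (false :: x)).tail).length = l} with hτ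
      have hswap : ∀ x : List Bool, x.length < d - 1 →
          ((f (true :: x)).tail).length = ((f (false :: x)).tail).length := by
        intro x hx
        simp only [List.length_tail]
        rw [hreg.1 (true :: x) (false :: x) (by simp; omega) (by simp; omega) rfl]
      have hmemA : τ ∈ sigs {t | c :: t ∈ H} := by
        refine ⟨d - 1, fun x => (f (false :: x)).tail, ⟨?_, ?_⟩, ?_, rfl⟩
        · intro x y hx hy hxy
          simp only [List.length_tail]
          rw [hreg.1 (false :: x) (false :: y) (by simp; omega) (by simp; omega)
            (by simp [hxy])]
        · intro x hx
          obtain ⟨c', h0, h1⟩ := hreg.2 (false :: x) (by simp; omega)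
          simp only [List.cons_append] at h0 h1
          rw [hhead x (by omega), hhead (x ++ [false]) (by simp; omega)] at h0
          rw [hhead x (by omega), hhead (x ++ [true]) (by simp; omega)] at h1
          rw [List.cons_append, List.cons_prefix_cons] at h0 h1
          exact ⟨c', h0.2, h1.2⟩
        · intro x hx
          have : c :: (f (false :: x)).tail ∈ H := by
            rw [← hhead x (by omega)]
            exact hmem _ (by simp; omega)
          exact this
      have hmemB : τ ∈ sigs {t | (!c) :: t ∈ H} := by
        refine ⟨d - 1, fun x => (f (true :: x)).tail, ⟨?_, ?_⟩, ?_, ?_⟩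
        · intro x y hx hy hxy
          simp only [List.length_tail]
          rw [hreg.1 (true :: x) (true :: y) (by simp; omega) (by simp; omega)
            (by simp [hxy])]
        · intro x hx
          obtain ⟨c', h0, h1⟩ := hreg.2 (true :: x) (by simp; omega)
          simp only [List.cons_append] at h0 h1
          rw [hhead' x (by omega), hhead' (x ++ [false]) (by simp; omega)] at h0
          rw [hhead' x (by omega), hhead' (x ++ [true]) (by simp; omega)] at h1
          rw [List.cons_append, List.cons_prefix_cons] at h0 h1
          exact ⟨c', h0.2, h1.2⟩
        · intro x hx
          have : (!c) :: (f (true :: x)).tail ∈ H := by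
            rw [← hhead' x (by omega)]
            exact hmem _ (by simp; omega)
          exact this
        · ext l
          simp only [hτ, Set.mem_setOf_eq]
          constructor
          · rintro ⟨x, hx, rfl⟩; exact ⟨x, hx, hswap x hx⟩
          · rintro ⟨x, hx, rfl⟩; exact ⟨x, hx, (hswap x hx).symm⟩
      right
      refine ⟨τ, ?_, ?_, ?_⟩
      · cases c
        · exact hmemA
        · simpa using hmemB
      · cases c
        · simpa using hmemB
        · exact hmemA
      · ext l
        simp only [Set.mem_setOf_eq, Set.mem_insert_iff, Set.mem_image, hτ]
        constructor
        · rintro ⟨x, hx, rfl⟩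
          match x with
          | [] => left; rw [heq]; rfl
          | (false :: y) =>
            simp only [List.length_cons] at hx
            refine Or.inr ⟨((f (false :: y)).tail).length, ⟨y, by omega, rfl⟩, ?_⟩
            conv_rhs => rw [hhead y (by omega)]
            rfl
          | (true :: y) =>
            simp only [List.length_cons] at hx
            refine Or.inr ⟨((f (true :: y)).tail).length,
              ⟨y, by omega, (hswap y (by omega)).symm⟩, ?_⟩
            conv_rhs => rw [hhead' y (by omega)]
            rfl
        · rintro (rfl | ⟨m, ⟨x, hx, rfl⟩, rfl⟩)
          · exact ⟨[], by simp; omega, by rw [heq]; rfl⟩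
          · refine ⟨false :: x, by simp; omega, ?_⟩
            conv_lhs => rw [hhead x (by omega)]
            rfl
  · -- f [] = b :: t ≠ []
    have hpre : ∀ x : List Bool, x.length < d → f [] <+: f x := by
      intro x hx
      simpa using regEmb_prefix hreg x [] (by simpa using hx)
    have hhead : ∀ x : List Bool, x.length < d → f x = b :: (f x).tail := by
      intro x hx
      obtain ⟨u, hu⟩ := hpre x hx
      rw [heq] at hu
      rw [← hu]; rfl
    left
    refine ⟨b, {l | ∃ x : List Bool, x.length < d ∧ ((f x).tail).length = l},
      ⟨d, fun x => (f x).tail, ⟨?_, ?_⟩, ?_, rfl⟩, ?_⟩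
    · intro x y hx hy hxy
      simp only [List.length_tail]
      rw [hreg.1 x y hx hy hxy]
    · intro x hx
      obtain ⟨c', h0, h1⟩ := hreg.2 x hx
      rw [hhead x (by omega), hhead (x ++ [false]) (by simp; omega)] at h0
      rw [hhead x (by omega), hhead (x ++ [true]) (by simp; omega)] at h1
      rw [List.cons_append, List.cons_prefix_cons] at h0 h1
      exact ⟨c', h0.2, h1.2⟩
    · intro x hx
      have : b :: (f x).tail ∈ H := by
        rw [← hhead x hx]
        exact hmem x hx
      exact this
    · ext l
      simp only [Set.mem_setOf_eq, Set.mem_image]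
      constructor
      · rintro ⟨x, hx, rfl⟩
        refine ⟨((f x).tail).length, ⟨x, hx, rfl⟩, ?_⟩
        conv_rhs => rw [hhead x hx]
        rfl
      · rintro ⟨m, ⟨x, hx, rfl⟩, rfl⟩
        refine ⟨x, hx, ?_⟩
        conv_lhs => rw [hhead x hx]
        rfl

lemma sigs_finite {K : Set (List Bool)} {n : ℕ} (hK : K ⊆ treeVerts n) :
    (sigs K).Finite := by
  apply Set.Finite.subset (Set.finite_Iio n).finite_subsets
  rintro σ ⟨d, f, -, hmem, rfl⟩ l ⟨x, hx, rfl⟩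
  exact hK (hmem x hx)


/-- If the root `r = []` belongs to `H ⊆ V(T_n)`, then, writing `H'`, `H''`
for the parts of `H` in the two subtrees of `T_n - r` (with levels shifted so
their roots are at level 0), `S(H)` is the disjoint union of
`S(H') ∪ S(H'')` and `{σ ∪ {0} : σ ∈ S(H') ∩ S(H'')}` (all signature levels
shifted up by 1), and hence `|S(H)| = |S(H')| + |S(H'')|`. -/
theorem stmt14 (n : ℕ) (H : Set (List Bool)) (hH : H ⊆ treeVerts n)
    (hr : ([] : List Bool) ∈ H) :
    sigs H =
      ((fun σ : Set ℕ => (· + 1) '' σ) ''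
          (sigs {t | false :: t ∈ H} ∪ sigs {t | true :: t ∈ H})) ∪
      ((fun σ : Set ℕ => insert 0 ((· + 1) '' σ)) ''
          (sigs {t | false :: t ∈ H} ∩ sigs {t | true :: t ∈ H})) ∧
    Disjoint
      ((fun σ : Set ℕ => (· + 1) '' σ) ''
          (sigs {t | false :: t ∈ H} ∪ sigs {t | true :: t ∈ H}))
      ((fun σ : Set ℕ => insert 0 ((· + 1) '' σ)) ''
          (sigs {t | false :: t ∈ H} ∩ sigs {t | true :: t ∈ H})) ∧
    (sigs H).ncard =
      (sigs {t | false :: t ∈ H}).ncard + (sigs {t | true :: t ∈ H}).ncard := by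
  have heq : sigs H =
      ((fun σ : Set ℕ => (· + 1) '' σ) ''
          (sigs {t | false :: t ∈ H} ∪ sigs {t | true :: t ∈ H})) ∪
      ((fun σ : Set ℕ => insert 0 ((· + 1) '' σ)) ''
          (sigs {t | false :: t ∈ H} ∩ sigs {t | true :: t ∈ H})) := by
    ext σ
    constructor
    · intro hσ
      rcases sigs_subset hσ with ⟨b, τ, hτ, rfl⟩ | ⟨τ, h0, h1, rfl⟩
      · refine Or.inl ⟨τ, ?_, rfl⟩
        cases b
        · exact Or.inl hτ
        · exact Or.inr hτ
      · exact Or.inr ⟨τ, ⟨h0, h1⟩, rfl⟩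
    · rintro (⟨τ, (h | h), rfl⟩ | ⟨τ, ⟨h0, h1⟩, rfl⟩)
      · exact lift_mem false h
      · exact lift_mem true h
      · exact combine_mem hr h0 h1
  have hdisj : Disjoint
      ((fun σ : Set ℕ => (· + 1) '' σ) ''
          (sigs {t | false :: t ∈ H} ∪ sigs {t | true :: t ∈ H}))
      ((fun σ : Set ℕ => insert 0 ((· + 1) '' σ)) ''
          (sigs {t | false :: t ∈ H} ∩ sigs {t | true :: t ∈ H})) := by
    rw [Set.disjoint_left]
    rintro σ ⟨τ, -, rfl⟩ ⟨τ', -, h⟩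
    simp only at h
    have h0 : (0 : ℕ) ∈ (fun x => x + 1) '' τ := by
      rw [← h]; exact Set.mem_insert 0 _
    obtain ⟨m, -, hm⟩ := h0
    simp only at hm
    omega
  refine ⟨heq, hdisj, ?_⟩
  have hsub : ∀ b : Bool, {t | b :: t ∈ H} ⊆ treeVerts n := by
    intro b t ht
    have := hH ht
    simp only [treeVerts, Set.mem_setOf_eq, List.length_cons] at this ⊢
    omega
  have h0fin : (sigs {t | false :: t ∈ H}).Finite := sigs_finite (hsub false)
  have h1fin : (sigs {t | true :: t ∈ H}).Finite := sigs_finite (hsub true)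
  have hinj1 : Function.Injective (fun σ : Set ℕ => (· + 1) '' σ) :=
    Set.image_injective.mpr (fun a b hab => by omega)
  have hinj2 : Function.Injective (fun σ : Set ℕ => insert 0 ((· + 1) '' σ)) := by
    intro s t h
    simp only at h
    ext x
    have h' := Set.ext_iff.mp h (x + 1)
    simp only [Set.mem_insert_iff, Set.mem_image] at h'
    constructor
    · intro hx
      obtain ⟨y, hy, hyx⟩ := (h'.mp (Or.inr ⟨x, hx, rfl⟩)).resolve_left (by omega)
      have : y = x := by omega
      exact this ▸ hy
    · intro hx
      obtain ⟨y, hy, hyx⟩ := (h'.mpr (Or.inr ⟨x, hx, rfl⟩)).resolve_left (by omega)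
      have : y = x := by omega
      exact this ▸ hy
  rw [heq, Set.ncard_union_eq hdisj ((h0fin.union h1fin).image _)
      ((h0fin.inter_of_left _).image _),
    Set.ncard_image_of_injective _ hinj1, Set.ncard_image_of_injective _ hinj2,
    Set.ncard_union_add_ncard_inter _ _ h0fin h1fin]
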